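/- Coercivity of the homogenized elasticity tensor A₀ˢ (claim in Lemma 5.7 via identity (5.31)): Let Y = (0,1)³, let Y_s ⊆ Y be measurable with Lebesgue measure |Y_s|, and let κ ≥ 0. For each pair i,j ∈ {1,2,3} let U^{ij} : ℝ³ → ℝ³ be continuously differentiable with U^{ij} = U^{ji}, and let Π^{ij} : Y → ℝ be square-integrable with Π^{ij} = Π^{ji}. Assume that for all i,j,k,l: ∫_{Y_s} D(U^{ij}) : J^{kl} dy = − ∫_{Y_s} D(U^{ij}) : D(U^{kl}) dy − κ ∫_{Y_s} Π^{ij} Π^{kl} dy. Define, for each symmetric 3×3 matrix ζ, A₀(ζ) := ζ + Σ_{i,j} ζ_{ij} ∫_{Y_s} D(U^{ij}) dy, and set Z_ζ := Σ_{i,j} ζ_{ij} U^{ij} and Π_ζ := Σ_{i,j} ζ_{ij} Π^{ij}. Then for every symmetric 3×3 matrix ζ: A₀(ζ) : ζ = (1 − |Y_s|) (ζ : ζ) + ∫_{Y_s} | D(Z_ζ)(y) + ζ |² dy + κ ∫_{Y_s} Π_ζ(y)² dy. In particular, if |Y_s| < 1 then A₀(ζ) : ζ ≥ (1 − |Y_s|)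 (ζ : ζ), so A₀ is strictly positive definite on symmetric matrices. -/

import Mathlib

open MeasureTheory Filter Topology

noncomputable section

/-- The spatial variable lives in `ℝ³`, modeled as `Fin 3 → ℝ`. -/
abbrev X3 := Fin 3 → ℝ

/-- The open unit cell `Y = (0,1)³`. -/
def cubeO : Set X3 := {x | ∀ i, x i ∈ Set.Ioo (0 : ℝ) 1}

/-- The entries of the symmetrized gradient `D(U) = (∇U + (∇U)ᵀ)/2`. -/
def symGrad (U : X3 → X3) (y : X3) (p q : Fin 3) : ℝ :=
  (1 / 2) * (fderiv ℝ (fun z => U z p) y (Pi.single q 1) +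
    fderiv ℝ (fun z => U z q) y (Pi.single p 1))

/-- The matrix `J^{kl} = (1/2)(e_k ⊗ e_l + e_l ⊗ e_k)`. -/
def Jmat (k l : Fin 3) (p q : Fin 3) : ℝ :=
  (1 / 2) * ((if p = k ∧ q = l then (1 : ℝ) else 0) +
    (if p = l ∧ q = k then (1 : ℝ) else 0))

/-- The Frobenius inner product `A : B = Σ_{p,q} A_{pq} B_{pq}` of 3×3 matrices. -/
def matInner (A B : Fin 3 → Fin 3 → ℝ) : ℝ := ∑ p, ∑ q, A p q * B p q

lemma symGrad_symm (U : X3 → X3) (y : X3) (p q : Fin 3) :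
    symGrad U y p q = symGrad U y q p := by
  unfold symGrad; ring

lemma matInner_J (A : Fin 3 → Fin 3 → ℝ) (k l : Fin 3) :
    matInner A (Jmat k l) = (1/2) * (A k l + A l k) := by
  fin_cases k <;> fin_cases l <;>
    simp [matInner, Jmat, Fin.sum_univ_three] <;> ring

lemma matInner_self_nonneg (A : Fin 3 → Fin 3 → ℝ) : 0 ≤ matInner A A :=
  Finset.sum_nonneg fun p _ => Finset.sum_nonneg fun q _ => mul_self_nonneg _

lemma integral_quad_sum {α : Type*} [MeasurableSpace α] (μ : Measure α)
    (c : Fin 3 → Fin 3 → Fin 3 → Fin 3 → ℝ) (g : Fin 3 → Fin 3 → Fin 3 → Fin 3 → α → ℝ)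
    (hg : ∀ i j k l, Integrable (g i j k l) μ) :
    ∫ y, ∑ i, ∑ j, ∑ k, ∑ l, c i j k l * g i j k l y ∂μ =
      ∑ i, ∑ j, ∑ k, ∑ l, c i j k l * ∫ y, g i j k l y ∂μ := by
  rw [integral_finset_sum _ fun i _ => integrable_finset_sum _ fun j _ =>
    integrable_finset_sum _ fun k _ => integrable_finset_sum _ fun l _ =>
      (hg i j k l).const_mul _]
  refine Finset.sum_congr rfl fun i _ => ?_
  rw [integral_finset_sum _ fun j _ => integrable_finset_sum _ fun k _ =>
    integrable_finset_sum _ fun l _ => (hg i j k l).const_mul _]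
  refine Finset.sum_congr rfl fun j _ => ?_
  rw [integral_finset_sum _ fun k _ => integrable_finset_sum _ fun l _ =>
    (hg i j k l).const_mul _]
  refine Finset.sum_congr rfl fun k _ => ?_
  rw [integral_finset_sum _ fun l _ => (hg i j k l).const_mul _]
  refine Finset.sum_congr rfl fun l _ => ?_
  exact integral_const_mul _ _

set_option maxHeartbeats 3000000 in
/-- **Coercivity of the homogenized elasticity tensor `A₀ˢ`** (claim in Lemma 5.7 via
identity (5.31)): with `A₀(ζ) = ζ + Σ_{ij} ζ_{ij} ∫_{Ys} D(U^{ij})`,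
`Z_ζ = Σ_{ij} ζ_{ij} U^{ij}` and `Π_ζ = Σ_{ij} ζ_{ij} Π^{ij}`, one has
`A₀(ζ) : ζ = (1 − |Ys|)(ζ : ζ) + ∫_{Ys} |D(Z_ζ) + ζ|² + κ ∫_{Ys} Π_ζ²`; in
particular `A₀(ζ) : ζ ≥ (1 − |Ys|)(ζ : ζ)` when `|Ys| < 1`. -/
theorem homogenized_tensor_coercive
    (Ys : Set X3) (hYsub : Ys ⊆ cubeO) (hYmeas : MeasurableSet Ys)
    (κ : ℝ) (hκ : 0 ≤ κ)
    (U : Fin 3 → Fin 3 → X3 → X3)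
    (hU : ∀ i j, ContDiff ℝ 1 (U i j))
    (hUsym : ∀ i j, U i j = U j i)
    (P : Fin 3 → Fin 3 → X3 → ℝ)
    (hP : ∀ i j, MemLp (P i j) 2 (volume.restrict cubeO))
    (hPsym : ∀ i j, P i j = P j i)
    (hcell : ∀ i j k l : Fin 3,
      ∫ y in Ys, matInner (symGrad (U i j) y) (Jmat k l) =
        -(∫ y in Ys, matInner (symGrad (U i j) y) (symGrad (U k l) y)) -
          κ * ∫ y in Ys, P i j y * P k l y) :
    (∀ ζ : Fin 3 → Fin 3 → ℝ, (∀ p q, ζ p q = ζ q p) →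
      matInner (fun p q => ζ p q + ∑ i, ∑ j, ζ i j * ∫ y in Ys, symGrad (U i j) y p q)
          ζ =
        (1 - (volume Ys).toReal) * matInner ζ ζ +
          (∫ y in Ys,
            matInner
              (fun p q => symGrad (fun z r => ∑ i, ∑ j, ζ i j * U i j z r) y p q + ζ p q)
              (fun p q => symGrad (fun z r => ∑ i, ∑ j, ζ i j * U i j z r) y p q + ζ p q)) +
          κ * ∫ y in Ys, (∑ i, ∑ j, ζ i j * P i j y) ^ 2) ∧
    ((volume Ys).toReal < 1 →
      ∀ ζ : Fin 3 → Fin 3 → ℝ, (∀ p q, ζ p q = ζ q p) →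
        (1 - (volume Ys).toReal) * matInner ζ ζ ≤
          matInner
            (fun p q => ζ p q + ∑ i, ∑ j, ζ i j * ∫ y in Ys, symGrad (U i j) y p q)
            ζ) := by
  -- basic differentiability / continuity facts
  have hUdc : ∀ i j p, ContDiff ℝ 1 (fun z => U i j z p) :=
    fun i j p => (contDiff_pi.mp (hU i j)) p
  have hUd : ∀ i j p, Differentiable ℝ (fun z => U i j z p) :=
    fun i j p => (hUdc i j p).differentiable one_ne_zero
  have hcontsg : ∀ i j p q, Continuous fun y => symGrad (U i j) y p q := by
    intro i j p q
    have h1 : Continuous fun y => (fderiv ℝ (fun z => U i j z p) y) (Pi.single q 1) :=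
      ((hUdc i j p).continuous_fderiv one_ne_zero).clm_apply continuous_const
    have h2 : Continuous fun y => (fderiv ℝ (fun z => U i j z q) y) (Pi.single p 1) :=
      ((hUdc i j q).continuous_fderiv one_ne_zero).clm_apply continuous_const
    exact continuous_const.mul (h1.add h2)
  -- integrability of continuous functions on Ys
  have hYK : Ys ⊆ Set.Icc (0 : X3) (1 : X3) := by
    intro y hy
    have h := hYsub hy
    exact ⟨fun i => (h i).1.le, fun i => (h i).2.le⟩
  have hIcont : ∀ {f : X3 → ℝ}, Continuous f → IntegrableOn f Ys volume :=
    fun {f} hf => (hf.continuousOn.integrableOn_compact isCompact_Icc).mono_set hYK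
  -- integrability of products of the pressures
  have hPYs : ∀ i j, MemLp (P i j) 2 (volume.restrict Ys) :=
    fun i j => (hP i j).mono_measure (Measure.restrict_mono hYsub le_rfl)
  have hIntP : ∀ i j k l, Integrable (fun y => P i j y * P k l y) (volume.restrict Ys) := by
    intro i j k l
    have h : MemLp ((P i j) • (P k l)) 1 (volume.restrict Ys) :=
      (hPYs k l).smul (hpqr := ⟨by rw [inv_one, ENNReal.inv_two_add_inv_two]⟩) (hPYs i j)
    exact memLp_one_iff_integrable.mp h
  -- the key scalar consequence of the cell problems
  have E1 : ∀ i j k l : Fin 3, (∫ y in Ys, symGrad (U i j) y k l) =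
      -(∫ y in Ys, matInner (symGrad (U i j) y) (symGrad (U k l) y)) -
        κ * ∫ y in Ys, P i j y * P k l y := by
    intro i j k l
    have h2 : (∫ y in Ys, matInner (symGrad (U i j) y) (Jmat k l)) =
        ∫ y in Ys, symGrad (U i j) y k l := by
      congr 1
      funext y
      rw [matInner_J, symGrad_symm (U i j) y l k]
      ring
    rw [← h2]
    exact hcell i j k l
  have key : ∀ ζ : Fin 3 → Fin 3 → ℝ, (∀ p q, ζ p q = ζ q p) →
      matInner (fun p q => ζ p q + ∑ i, ∑ j, ζ i j * ∫ y in Ys, symGrad (U i j) y p q)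
          ζ =
        (1 - (volume Ys).toReal) * matInner ζ ζ +
          (∫ y in Ys,
            matInner
              (fun p q => symGrad (fun z r => ∑ i, ∑ j, ζ i j * U i j z r) y p q + ζ p q)
              (fun p q => symGrad (fun z r => ∑ i, ∑ j, ζ i j * U i j z r) y p q + ζ p q)) +
          κ * ∫ y in Ys, (∑ i, ∑ j, ζ i j * P i j y) ^ 2 := by
    intro ζ hζ
    -- linearity of the symmetrized gradient
    have hfder : ∀ (y : X3) (p : Fin 3),
        HasFDerivAt (fun z => ∑ i, ∑ j, ζ i j * U i j z p)
          (∑ i, ∑ j, ζ i j • fderiv ℝ (fun z => U i j z p) y) y := by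
      intro y p
      refine HasFDerivAt.fun_sum fun i _ => HasFDerivAt.fun_sum fun j _ => ?_
      exact ((hUd i j p) y).hasFDerivAt.const_mul (ζ i j)
    have hlin : ∀ (y : X3) (p q : Fin 3),
        symGrad (fun z r => ∑ i, ∑ j, ζ i j * U i j z r) y p q =
          ∑ i, ∑ j, ζ i j * symGrad (U i j) y p q := by
      intro y p q
      have h1 := (hfder y p).fderiv
      have h2 := (hfder y q).fderiv
      simp only [symGrad]
      rw [h1, h2]
      simp only [Fin.sum_univ_three, ContinuousLinearMap.add_apply,
        ContinuousLinearMap.coe_smul', Pi.smul_apply, smul_eq_mul]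
      ring
    -- step 1: the left-hand side
    have hL : matInner
        (fun p q => ζ p q + ∑ i, ∑ j, ζ i j * ∫ y in Ys, symGrad (U i j) y p q) ζ =
        matInner ζ ζ +
          ∑ i, ∑ j, ∑ k, ∑ l, ζ i j * ζ k l * ∫ y in Ys, symGrad (U i j) y k l := by
      simp only [matInner, Fin.sum_univ_three]
      ring
    -- step 2: the elastic energy integral
    have hc1 : ∀ i j k l : Fin 3,
        Continuous fun y => matInner (symGrad (U i j) y) (symGrad (U k l) y) := by
      intro i j k l
      simp only [matInner]
      exact continuous_finset_sum _ fun p _ => continuous_finset_sum _ fun q _ =>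
        (hcontsg i j p q).mul (hcontsg k l p q)
    have hpt : ∀ y : X3,
        matInner
          (fun p q => symGrad (fun z r => ∑ i, ∑ j, ζ i j * U i j z r) y p q + ζ p q)
          (fun p q => symGrad (fun z r => ∑ i, ∑ j, ζ i j * U i j z r) y p q + ζ p q) =
        (∑ i, ∑ j, ∑ k, ∑ l,
            ζ i j * ζ k l * matInner (symGrad (U i j) y) (symGrad (U k l) y)) +
          (∑ i, ∑ j, ∑ k, ∑ l, (2 * (ζ i j * ζ k l)) * symGrad (U i j) y k l) +
          matInner ζ ζ := by
      intro y
      simp only [hlin]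
      simp only [matInner, Fin.sum_univ_three]
      ring
    have hA : (∫ y in Ys, ∑ i, ∑ j, ∑ k, ∑ l,
          ζ i j * ζ k l * matInner (symGrad (U i j) y) (symGrad (U k l) y)) =
        ∑ i, ∑ j, ∑ k, ∑ l,
          ζ i j * ζ k l * ∫ y in Ys, matInner (symGrad (U i j) y) (symGrad (U k l) y) :=
      integral_quad_sum (volume.restrict Ys) (fun i j k l => ζ i j * ζ k l)
        (fun i j k l y => matInner (symGrad (U i j) y) (symGrad (U k l) y))
        (fun i j k l => hIcont (hc1 i j k l))
    have hS : (∫ y in Ys, ∑ i, ∑ j, ∑ k, ∑ l,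
          (2 * (ζ i j * ζ k l)) * symGrad (U i j) y k l) =
        ∑ i, ∑ j, ∑ k, ∑ l,
          (2 * (ζ i j * ζ k l)) * ∫ y in Ys, symGrad (U i j) y k l :=
      integral_quad_sum (volume.restrict Ys) (fun i j k l => 2 * (ζ i j * ζ k l))
        (fun i j k l y => symGrad (U i j) y k l)
        (fun i j k l => hIcont (hcontsg i j k l))
    have hI2 : (∫ y in Ys,
          matInner
            (fun p q => symGrad (fun z r => ∑ i, ∑ j, ζ i j * U i j z r) y p q + ζ p q)
            (fun p q => symGrad (fun z r => ∑ i, ∑ j, ζ i j * U i j z r) y p q + ζ p q)) =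
        (∑ i, ∑ j, ∑ k, ∑ l,
            ζ i j * ζ k l * ∫ y in Ys, matInner (symGrad (U i j) y) (symGrad (U k l) y)) +
          (∑ i, ∑ j, ∑ k, ∑ l,
            (2 * (ζ i j * ζ k l)) * ∫ y in Ys, symGrad (U i j) y k l) +
          (volume Ys).toReal * matInner ζ ζ := by
      have int1 : Integrable (fun y => ∑ i, ∑ j, ∑ k, ∑ l,
          ζ i j * ζ k l * matInner (symGrad (U i j) y) (symGrad (U k l) y))
          (volume.restrict Ys) :=
        integrable_finset_sum _ fun i _ => integrable_finset_sum _ fun j _ =>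
          integrable_finset_sum _ fun k _ => integrable_finset_sum _ fun l _ =>
            (hIcont (hc1 i j k l)).const_mul _
      have int2 : Integrable (fun y => ∑ i, ∑ j, ∑ k, ∑ l,
          (2 * (ζ i j * ζ k l)) * symGrad (U i j) y k l) (volume.restrict Ys) :=
        integrable_finset_sum _ fun i _ => integrable_finset_sum _ fun j _ =>
          integrable_finset_sum _ fun k _ => integrable_finset_sum _ fun l _ =>
            (hIcont (hcontsg i j k l)).const_mul _
      have int3 : Integrable (fun _ : X3 => matInner ζ ζ) (volume.restrict Ys) :=
        hIcont continuous_const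
      calc (∫ y in Ys,
          matInner
            (fun p q => symGrad (fun z r => ∑ i, ∑ j, ζ i j * U i j z r) y p q + ζ p q)
            (fun p q => symGrad (fun z r => ∑ i, ∑ j, ζ i j * U i j z r) y p q + ζ p q))
          = ∫ y in Ys, ((∑ i, ∑ j, ∑ k, ∑ l,
              ζ i j * ζ k l * matInner (symGrad (U i j) y) (symGrad (U k l) y)) +
            (∑ i, ∑ j, ∑ k, ∑ l, (2 * (ζ i j * ζ k l)) * symGrad (U i j) y k l) +
            matInner ζ ζ) := by simp only [hpt]
        _ = (∫ y in Ys, ((∑ i, ∑ j, ∑ k, ∑ l,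
              ζ i j * ζ k l * matInner (symGrad (U i j) y) (symGrad (U k l) y)) +
            ∑ i, ∑ j, ∑ k, ∑ l, (2 * (ζ i j * ζ k l)) * symGrad (U i j) y k l)) +
            ∫ y in Ys, (fun _ : X3 => matInner ζ ζ) y :=
          integral_add (int1.add int2) int3
        _ = ((∫ y in Ys, ∑ i, ∑ j, ∑ k, ∑ l,
              ζ i j * ζ k l * matInner (symGrad (U i j) y) (symGrad (U k l) y)) +
            (∫ y in Ys, ∑ i, ∑ j, ∑ k, ∑ l,
              (2 * (ζ i j * ζ k l)) * symGrad (U i j) y k l)) +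
            ∫ y in Ys, (fun _ : X3 => matInner ζ ζ) y :=
          congrArg (fun t => t + ∫ y in Ys, (fun _ : X3 => matInner ζ ζ) y)
            (integral_add int1 int2)
        _ = _ := by
          rw [hA, hS, setIntegral_const, smul_eq_mul]
          rfl
    -- step 3: the pressure integral
    have hptP : ∀ y : X3, (∑ i, ∑ j, ζ i j * P i j y) ^ 2 =
        ∑ i, ∑ j, ∑ k, ∑ l, ζ i j * ζ k l * (P i j y * P k l y) := by
      intro y
      simp only [Fin.sum_univ_three]
      ring
    have hI3 : (∫ y in Ys, (∑ i, ∑ j, ζ i j * P i j y) ^ 2) =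
        ∑ i, ∑ j, ∑ k, ∑ l, ζ i j * ζ k l * ∫ y in Ys, P i j y * P k l y := by
      calc (∫ y in Ys, (∑ i, ∑ j, ζ i j * P i j y) ^ 2)
          = ∫ y in Ys, ∑ i, ∑ j, ∑ k, ∑ l, ζ i j * ζ k l * (P i j y * P k l y) := by
            simp only [hptP]
        _ = _ := integral_quad_sum (volume.restrict Ys) (fun i j k l => ζ i j * ζ k l)
            (fun i j k l y => P i j y * P k l y) hIntP
    -- assemble everything
    rw [hL, hI2, hI3]
    simp only [E1, Fin.sum_univ_three]
    ring
  refine ⟨key, fun _ ζ hζ => ?_⟩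
  rw [key ζ hζ]
  have h1 : 0 ≤ ∫ y in Ys,
      matInner
        (fun p q => symGrad (fun z r => ∑ i, ∑ j, ζ i j * U i j z r) y p q + ζ p q)
        (fun p q => symGrad (fun z r => ∑ i, ∑ j, ζ i j * U i j z r) y p q + ζ p q) :=
    integral_nonneg fun y => matInner_self_nonneg _
  have h2 : 0 ≤ κ * ∫ y in Ys, (∑ i, ∑ j, ζ i j * P i j y) ^ 2 :=
    mul_nonneg hκ (integral_nonneg fun y => sq_nonneg _)
  linarith
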